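/- Let Ā be an algebra in a congruence modular variety with Gumm difference term d, let A be a subalgebra of Ā, let a ∈ A, let ᾱ ≤ ζ̄ where ζ̄ is the center of Ā, and let β ≤ ᾱ|_A be a congruence on A. Define β̄ := {(x,y) ∈ ζ̄ : d(a,x,y) ∈ [a]β}. Then β̄ is a congruence on Ā with β̄ ≤ ᾱ and β̄|_A = β. -/

import Mathlib

/-- An algebraic signature: a type of operation symbols with finite arities. -/
structure Signature where
  ops : Type
  arity : ops → ℕ

/-- An algebra for a signature. -/
structure SAlgebra (S : Signature) where
  carrier : Type
  interp : (o : S.ops) → (Fin (S.arity o) → carrier) → carrier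

namespace SAlgebra

variable {S : Signature}

/-- Binary product of algebras. -/
def prod (A B : SAlgebra S) : SAlgebra S where
  carrier := A.carrier × B.carrier
  interp o x := (A.interp o fun i => (x i).1, B.interp o fun i => (x i).2)

/-- Product of a family of algebras. -/
def pi {ι : Type} (A : ι → SAlgebra S) : SAlgebra S where
  carrier := ∀ i, (A i).carrier
  interp o x i := (A i).interp o fun j => x j i

end SAlgebra

/-- Homomorphisms of algebras. -/
structure SHom {S : Signature} (A B : SAlgebra S) where
  toFun : A.carrier → B.carrier
  map : ∀ (o : S.ops) (x : Fin (S.arity o) → A.carrier),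
    toFun (A.interp o x) = B.interp o fun i => toFun (x i)

namespace SHom

variable {S : Signature}

/-- Composition of homomorphisms. -/
def comp {A B C : SAlgebra S} (g : SHom B C) (f : SHom A B) : SHom A C where
  toFun := g.toFun ∘ f.toFun
  map o x := by simp [Function.comp, f.map, g.map]

/-- The `i`-th projection of a product. -/
def proj {ι : Type} (A : ι → SAlgebra S) (i : ι) : SHom (SAlgebra.pi A) (A i) where
  toFun x := x i
  map _ _ := rfl

end SHom

/-- Congruences of an algebra. -/
structure SCon {S : Signature} (A : SAlgebra S) where
  r : A.carrier → A.carrier → Prop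
  iseqv : Equivalence r
  compat : ∀ (o : S.ops) (x y : Fin (S.arity o) → A.carrier),
    (∀ i, r (x i) (y i)) → r (A.interp o x) (A.interp o y)

namespace SCon

variable {S : Signature} {A : SAlgebra S}

instance : PartialOrder (SCon A) where
  le c d := ∀ x y, c.r x y → d.r x y
  le_refl _ _ _ h := h
  le_trans _ _ _ h h' x y hx := h' x y (h x y hx)
  le_antisymm a b h h' := by
    cases a; cases b
    have : ∀ x y : A.carrier, _ ↔ _ := fun x y => Iff.intro (h x y) (h' x y)
    simp only [SCon.mk.injEq]
    funext x y
    exact propext (this x y)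

instance : InfSet (SCon A) :=
  ⟨fun s =>
    { r := fun x y => ∀ c ∈ s, c.r x y
      iseqv := ⟨fun x c _ => c.iseqv.refl x, fun h c hc => c.iseqv.symm (h c hc),
        fun h1 h2 c hc => c.iseqv.trans (h1 c hc) (h2 c hc)⟩
      compat := fun o x y h c hc => c.compat o x y fun i => h i c hc }⟩

instance : CompleteLattice (SCon A) :=
  completeLatticeOfInf _ (fun s =>
    ⟨fun c hc x y h => h c hc, fun b hb x y h c hc => hb hc x y h⟩)

/-- Restriction (inverse image) of a congruence along a homomorphism. -/
def comap {B : SAlgebra S} (f : SHom A B) (θ : SCon B) : SCon A where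
  r x y := θ.r (f.toFun x) (f.toFun y)
  iseqv := ⟨fun _ => θ.iseqv.refl _, θ.iseqv.symm, θ.iseqv.trans⟩
  compat o x y h := by
    show θ.r (f.toFun (A.interp o x)) (f.toFun (A.interp o y))
    rw [f.map, f.map]
    exact θ.compat o _ _ h

/-- Product of two congruences. -/
def prodCon {A B : SAlgebra S} (φ : SCon A) (ψ : SCon B) : SCon (A.prod B) where
  r x y := φ.r x.1 y.1 ∧ ψ.r x.2 y.2
  iseqv := ⟨fun _ => ⟨φ.iseqv.refl _, ψ.iseqv.refl _⟩,
    fun h => ⟨φ.iseqv.symm h.1, ψ.iseqv.symm h.2⟩,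
    fun h h' => ⟨φ.iseqv.trans h.1 h'.1, ψ.iseqv.trans h.2 h'.2⟩⟩
  compat o x y h := ⟨φ.compat o _ _ fun i => (h i).1, ψ.compat o _ _ fun i => (h i).2⟩

/-- Product of a family of congruences. -/
def piCon {ι : Type} {A : ι → SAlgebra S} (φ : ∀ i, SCon (A i)) : SCon (SAlgebra.pi A) where
  r x y := ∀ i, (φ i).r (x i) (y i)
  iseqv := ⟨fun _ i => (φ i).iseqv.refl _, fun h i => (φ i).iseqv.symm (h i),
    fun h h' i => (φ i).iseqv.trans (h i) (h' i)⟩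
  compat o x y h i := (φ i).compat o _ _ fun j => h j i

end SCon

/-- Terms in `n` variables over a signature. -/
inductive STerm (S : Signature) : ℕ → Type where
  | var : {n : ℕ} → Fin n → STerm S n
  | app : {n : ℕ} → (o : S.ops) → (Fin (S.arity o) → STerm S n) → STerm S n

/-- Evaluation of a term in an algebra. -/
def STerm.eval {S : Signature} (A : SAlgebra S) {n : ℕ} : STerm S n → (Fin n → A.carrier) → A.carrier
  | .var i, x => x i
  | .app o t, x => A.interp o fun j => (t j).eval A x

/-- The term-condition centralizer relation `C(α, β; δ)`. -/
def Centralizes {S : Signature} (A : SAlgebra S) (α β δ : SCon A) : Prop :=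
  ∀ (n m : ℕ) (t : STerm S (n + m)) (a b : Fin n → A.carrier) (u v : Fin m → A.carrier),
    (∀ i, α.r (a i) (b i)) → (∀ j, β.r (u j) (v j)) →
    δ.r (t.eval A (Fin.append a u)) (t.eval A (Fin.append a v)) →
    δ.r (t.eval A (Fin.append b u)) (t.eval A (Fin.append b v))

/-- The commutator `[α, β]`: the least congruence `δ` with `C(α, β; δ)`. -/
def conCommutator {S : Signature} (A : SAlgebra S) (α β : SCon A) : SCon A :=
  sInf {δ | Centralizes A α β δ}

/-- The center of an algebra: the largest central congruence. -/
def conCenter {S : Signature} (A : SAlgebra S) : SCon A :=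
  sSup {θ | conCommutator A θ ⊤ = ⊥}

/-- A class of algebras is a variety iff it is closed under subalgebras
(isomorphic copies included), homomorphic images and products. -/
def IsVariety {S : Signature} (V : SAlgebra S → Prop) : Prop :=
  (∀ (A B : SAlgebra S) (e : SHom A B), Function.Injective e.toFun → V B → V A) ∧
  (∀ (A B : SAlgebra S) (p : SHom A B), Function.Surjective p.toFun → V A → V B) ∧
  (∀ (ι : Type) (A : ι → SAlgebra S), (∀ i, V (A i)) → V (SAlgebra.pi A))

/-- A congruence modular variety. -/
def IsCongruenceModularVariety {S : Signature} (V : SAlgebra S → Prop) : Prop :=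
  IsVariety V ∧ ∀ A : SAlgebra S, V A → IsModularLattice (SCon A)

/-- A Gumm difference term for the class `V`:  `d(x,y,y) = x` holds identically,
and `d(x,x,y) = y` whenever `x θ y` for an abelian congruence `θ`. -/
def IsGummDifferenceTerm {S : Signature} (V : SAlgebra S → Prop) (d : STerm S 3) : Prop :=
  (∀ A : SAlgebra S, V A → ∀ x y : A.carrier, d.eval A ![x, y, y] = x) ∧
  (∀ A : SAlgebra S, V A → ∀ θ : SCon A, conCommutator A θ θ = ⊥ →
    ∀ x y : A.carrier, θ.r x y → d.eval A ![x, x, y] = y)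

/-- `R` is an absolute retract in `V`: every embedding of `R` into a member of `V`
admits a retraction. -/
def IsAbsoluteRetract {S : Signature} (V : SAlgebra S → Prop) (R : SAlgebra S) : Prop :=
  ∀ A : SAlgebra S, V A → ∀ e : SHom R A, Function.Injective e.toFun →
    ∃ p : SHom A R, ∀ x, p.toFun (e.toFun x) = x

/-- An embedding is essential iff every congruence of the codomain restricting
trivially is trivial. -/
def IsEssential {S : Signature} {A B : SAlgebra S} (e : SHom A B) : Prop :=
  ∀ θ : SCon B, SCon.comap e θ = ⊥ → θ = ⊥

/-- A congruence `α` is dense: any congruence meeting it trivially is trivial. -/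
def DenseCon {S : Signature} {A : SAlgebra S} (α : SCon A) : Prop :=
  ∀ θ : SCon A, θ ⊓ α = ⊥ → θ = ⊥

/-- The setoid underlying a congruence. -/
def SCon.setoid {S : Signature} {A : SAlgebra S} (θ : SCon A) : Setoid A.carrier :=
  ⟨θ.r, θ.iseqv⟩

/-- Quotient algebra. -/
noncomputable def SAlgebra.quot {S : Signature} (A : SAlgebra S) (θ : SCon A) : SAlgebra S where
  carrier := Quotient θ.setoid
  interp o x := Quotient.mk θ.setoid (A.interp o fun i => (x i).out)

theorem SCon.out_rel {S : Signature} {A : SAlgebra S} (θ : SCon A) (a : A.carrier) :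
    θ.r (Quotient.out (Quotient.mk θ.setoid a)) a :=
  @Quotient.exact _ θ.setoid _ _ (Quotient.out_eq _)

/-- The canonical quotient homomorphism. -/
def SHom.quotHom {S : Signature} (A : SAlgebra S) (θ : SCon A) : SHom A (A.quot θ) where
  toFun := Quotient.mk θ.setoid
  map o x := Quotient.sound (θ.compat o _ _ fun i => θ.iseqv.symm (θ.out_rel (x i)))

/-- Product map of a family of homomorphisms. -/
def SHom.piMap {S : Signature} {ι : Type} {A B : ι → SAlgebra S} (f : ∀ i, SHom (A i) (B i)) :
    SHom (SAlgebra.pi A) (SAlgebra.pi B) where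
  toFun x i := (f i).toFun (x i)
  map o x := funext fun i => (f i).map o fun j => x j i

/-- The congruence `φ/θ` on the quotient `A/θ`, for `θ ≤ φ`. -/
def SCon.quotCon {S : Signature} {A : SAlgebra S} (θ φ : SCon A) (h : θ ≤ φ) :
    SCon (A.quot θ) where
  r a b := φ.r a.out b.out
  iseqv := ⟨fun _ => φ.iseqv.refl _, φ.iseqv.symm, φ.iseqv.trans⟩
  compat o x y hxy := by
    have hx := h _ _ (θ.out_rel (A.interp o fun i => (x i).out))
    have hy := h _ _ (θ.out_rel (A.interp o fun i => (y i).out))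
    exact φ.iseqv.trans hx (φ.iseqv.trans (φ.compat o _ _ hxy) (φ.iseqv.symm hy))

/-- Finitely subdirectly irreducible: `⊥` is meet irreducible in the congruence lattice. -/
def IsFSI {S : Signature} (A : SAlgebra S) : Prop :=
  ∀ θ φ : SCon A, θ ⊓ φ = ⊥ → θ = ⊥ ∨ φ = ⊥

/-- Subdirectly irreducible: the congruence lattice has a monolith. -/
def IsSubdirectlyIrreducible {S : Signature} (A : SAlgebra S) : Prop :=
  ∃ μ : SCon A, μ ≠ ⊥ ∧ ∀ θ : SCon A, θ ≠ ⊥ → μ ≤ θ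

namespace CCE

variable {S : Signature}

/-- Renaming of variables in a term. -/
def rename {n m : ℕ} (f : Fin n → Fin m) : STerm S n → STerm S m
  | .var i => .var (f i)
  | .app o t => .app o (fun j => rename f (t j))

theorem eval_rename {A : SAlgebra S} {n m : ℕ} (f : Fin n → Fin m) (t : STerm S n)
    (env : Fin m → A.carrier) :
    (rename f t).eval A env = t.eval A (env ∘ f) := by
  induction t with
  | var i => rfl
  | app o ts ih => simp [rename, STerm.eval, ih]

/-- Substitution of terms for variables. -/
def subst {n m : ℕ} (σ : Fin n → STerm S m) : STerm S n → STerm S m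
  | .var i => σ i
  | .app o t => .app o (fun j => subst σ (t j))

theorem eval_subst {A : SAlgebra S} {n m : ℕ} (σ : Fin n → STerm S m) (t : STerm S n)
    (env : Fin m → A.carrier) :
    (subst σ t).eval A env = t.eval A (fun i => (σ i).eval A env) := by
  induction t with
  | var i => rfl
  | app o ts ih => simp [subst, STerm.eval, ih]

theorem eval_rel {A : SAlgebra S} (θ : SCon A) {n : ℕ} (t : STerm S n)
    {x y : Fin n → A.carrier} (h : ∀ i, θ.r (x i) (y i)) :
    θ.r (t.eval A x) (t.eval A y) := by
  induction t with
  | var i => exact h i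
  | app o ts ih => exact θ.compat o _ _ fun j => ih j

theorem hom_eval {A B : SAlgebra S} (e : SHom A B) {n : ℕ} (t : STerm S n)
    (env : Fin n → A.carrier) :
    e.toFun (t.eval A env) = t.eval B (fun i => e.toFun (env i)) := by
  induction t with
  | var i => rfl
  | app o ts ih => simp [STerm.eval, e.map, ih]

def allCon (A : SAlgebra S) : SCon A :=
  ⟨fun _ _ => True, ⟨fun _ => trivial, fun _ => trivial, fun _ _ => trivial⟩,
    fun _ _ _ _ => trivial⟩

def diagCon (A : SAlgebra S) : SCon A :=
  ⟨Eq, ⟨fun _ => rfl, Eq.symm, Eq.trans⟩, fun o x y h => congrArg _ (funext h)⟩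

theorem top_r {A : SAlgebra S} (x y : A.carrier) : (⊤ : SCon A).r x y :=
  (le_top : allCon A ≤ ⊤) x y trivial

theorem bot_iff {A : SAlgebra S} {x y : A.carrier} : (⊥ : SCon A).r x y ↔ x = y :=
  ⟨fun h => (bot_le : (⊥ : SCon A) ≤ diagCon A) x y h,
    fun h => h ▸ (⊥ : SCon A).iseqv.refl x⟩

theorem centralizes_commutator (A : SAlgebra S) (α β : SCon A) :
    Centralizes A α β (conCommutator A α β) := by
  intro n m t a b u v ha hu hp δ hδ
  exact hδ n m t a b u v ha hu (hp δ hδ)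

end CCE

namespace CCE

variable {S : Signature}

/-- The one-variable term-condition relation ("the center", concretely). -/
def Zr (A : SAlgebra S) (x y : A.carrier) : Prop :=
  ∀ (N : ℕ) (t : STerm S (1 + N)) (u v : Fin N → A.carrier),
    (t.eval A (Fin.append ![x] u) = t.eval A (Fin.append ![x] v)) ↔
    (t.eval A (Fin.append ![y] u) = t.eval A (Fin.append ![y] v))

/-- Master lemma: centrally related coordinates can be swapped in any equation. -/
theorem ML {A : SAlgebra S} {N : ℕ} (t : STerm S N) (p p' q q' : Fin N → A.carrier)
    (h : ∀ i, (Zr A (p i) (q i) ∧ p' i = p i ∧ q' i = q i) ∨ (q i = p i ∧ q' i = p' i)) :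
    (t.eval A p = t.eval A p' ↔ t.eval A q = t.eval A q') := by
  classical
  set P : ℕ → Fin N → A.carrier := fun k i => if (i : ℕ) < k then q i else p i with hP
  set P' : ℕ → Fin N → A.carrier := fun k i => if (i : ℕ) < k then q' i else p' i with hP'
  have key : ∀ k, (t.eval A (P k) = t.eval A (P' k) ↔
      t.eval A (P (k+1)) = t.eval A (P' (k+1))) := by
    intro k
    by_cases hk : k < N
    · set κ : Fin N := ⟨k, hk⟩ with hκ
      rcases h κ with ⟨hz, hp', hq'⟩ | ⟨hqp, hq'p'⟩
      · -- changing coordinate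
        set f : Fin N → Fin (1 + N) :=
          fun i => if i = κ then Fin.castAdd N 0 else Fin.natAdd 1 i with hf
        set t' := rename f t with ht'
        have he : ∀ (x : A.carrier) (w : Fin N → A.carrier),
            t'.eval A (Fin.append ![x] w) = t.eval A (fun i => if i = κ then x else w i) := by
          intro x w
          rw [ht', eval_rename]
          congr 1
          funext i
          by_cases hik : i = κ
          · simp [hf, hik, Fin.append_left]
          · simp [hf, hik, Fin.append_right]
        have e1 : (fun i => if i = κ then p κ else P k i) = P k := by
          funext i
          by_cases hik : i = κ
          · subst hik; simp [hP]; exact fun hc => absurd hc (lt_irrefl k)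
          · simp [hik]
        have e2 : (fun i => if i = κ then q κ else P k i) = P (k+1) := by
          funext i
          by_cases hik : i = κ
          · subst hik; simp [hP]; exact fun hc => absurd hc (lt_irrefl k)
          · have hne : (i : ℕ) ≠ k := fun hc => hik (Fin.ext hc)
            have : ((i : ℕ) < k + 1) = ((i : ℕ) < k) := by
              apply propext; omega
            simp [hik, hP, this]
        have e1' : (fun i => if i = κ then p κ else P' k i) = P' k := by
          funext i
          by_cases hik : i = κ
          · subst hik; simp [hP', hp']; exact fun hc => absurd hc (lt_irrefl k)
          · simp [hik]
        have e2' : (fun i => if i = κ then q κ else P' k i) = P' (k+1) := by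
          funext i
          by_cases hik : i = κ
          · subst hik; simp [hP', hq']; exact fun hc => absurd hc (lt_irrefl k)
          · have hne : (i : ℕ) ≠ k := fun hc => hik (Fin.ext hc)
            have : ((i : ℕ) < k + 1) = ((i : ℕ) < k) := by
              apply propext; omega
            simp [hik, hP', this]
        have c1 : t.eval A (P k) = t'.eval A (Fin.append ![p κ] (P k)) := by
          rw [he, e1]
        have c2 : t.eval A (P' k) = t'.eval A (Fin.append ![p κ] (P' k)) := by
          rw [he, e1']
        have c3 : t.eval A (P (k+1)) = t'.eval A (Fin.append ![q κ] (P k)) := by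
          rw [he, e2]
        have c4 : t.eval A (P' (k+1)) = t'.eval A (Fin.append ![q κ] (P' k)) := by
          rw [he, e2']
        rw [c1, c2, c3, c4]
        exact hz N t' (P k) (P' k)
      · -- inert coordinate
        have e2 : P (k+1) = P k := by
          funext i
          by_cases hik : i = κ
          · subst hik; simp [hP, hqp]
          · have hne : (i : ℕ) ≠ k := fun hc => hik (Fin.ext hc)
            have : ((i : ℕ) < k + 1) = ((i : ℕ) < k) := by
              apply propext; omega
            simp [hP, this]
        have e2' : P' (k+1) = P' k := by
          funext i
          by_cases hik : i = κ
          · subst hik; simp [hP', hq'p']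
          · have hne : (i : ℕ) ≠ k := fun hc => hik (Fin.ext hc)
            have : ((i : ℕ) < k + 1) = ((i : ℕ) < k) := by
              apply propext; omega
            simp [hP', this]
        rw [e2, e2']
    · have e2 : P (k+1) = P k := by
        funext i
        have h1 : (i : ℕ) < k := lt_of_lt_of_le i.isLt (le_of_not_gt hk)
        simp [hP, h1, Nat.lt_succ_of_lt h1]
      have e2' : P' (k+1) = P' k := by
        funext i
        have h1 : (i : ℕ) < k := lt_of_lt_of_le i.isLt (le_of_not_gt hk)
        simp [hP', h1, Nat.lt_succ_of_lt h1]
      rw [e2, e2']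
  have main : ∀ k, (t.eval A p = t.eval A p' ↔ t.eval A (P k) = t.eval A (P' k)) := by
    intro k
    induction k with
    | zero =>
      have : P 0 = p := by funext i; simp [hP]
      have h' : P' 0 = p' := by funext i; simp [hP']
      rw [this, h']
    | succ k ih => exact ih.trans (key k)
  have hq : P N = q := by funext i; simp [hP, i.isLt]
  have hq' : P' N = q' := by funext i; simp [hP', i.isLt]
  have := main N
  rwa [hq, hq'] at this

end CCE

namespace CCE

variable {S : Signature}

/-- The concrete center as a congruence. -/
def ZCon (A : SAlgebra S) : SCon A where
  r := Zr A
  iseqv := ⟨fun _ _ _ _ _ => Iff.rfl, fun h N t u v => (h N t u v).symm,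
    fun h h' N t u v => (h N t u v).trans (h' N t u v)⟩
  compat o x y h := by
    intro N t u v
    set σ : Fin (1 + N) → STerm S (S.arity o + N) :=
      Fin.append ![STerm.app o (fun i => STerm.var (Fin.castAdd N i))]
        (fun j => STerm.var (Fin.natAdd (S.arity o) j)) with hσ
    set t' := subst σ t with ht'
    have hev : ∀ (z : Fin (S.arity o) → A.carrier) (w : Fin N → A.carrier),
        t'.eval A (Fin.append z w) = t.eval A (Fin.append ![A.interp o z] w) := by
      intro z w
      rw [ht', eval_subst]
      congr 1
      funext i
      refine Fin.addCases (fun i1 => ?_) (fun j => ?_) i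
      · have h0 : i1 = 0 := Subsingleton.elim _ _
        subst h0
        simp [hσ, Fin.append_left, STerm.eval]
      · simp [hσ, Fin.append_right, STerm.eval]
    have := ML t' (Fin.append x u) (Fin.append x v) (Fin.append y u) (Fin.append y v) ?_
    · rwa [hev x u, hev x v, hev y u, hev y v] at this
    · intro i
      refine Fin.addCases (fun i1 => ?_) (fun j => ?_) i
      · refine Or.inl ?_
        simp only [Fin.append_left]
        exact ⟨h i1, trivial, trivial⟩
      · refine Or.inr ?_
        simp only [Fin.append_right]
        exact ⟨trivial, trivial⟩

theorem ZCon_centralizes (A : SAlgebra S) : Centralizes A (ZCon A) ⊤ ⊥ := by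
  intro n m t a b u v ha _ hp
  rw [bot_iff] at hp ⊢
  refine (ML t (Fin.append a u) (Fin.append a v) (Fin.append b u) (Fin.append b v) ?_).mp hp
  intro i
  refine Fin.addCases (fun i1 => ?_) (fun j => ?_) i
  · refine Or.inl ?_
    simp only [Fin.append_left]
    exact ⟨ha i1, trivial, trivial⟩
  · refine Or.inr ?_
    simp only [Fin.append_right]
    exact ⟨trivial, trivial⟩

theorem comm_Z_top (A : SAlgebra S) : conCommutator A (ZCon A) ⊤ = ⊥ :=
  le_antisymm (sInf_le (ZCon_centralizes A)) bot_le

theorem comm_Z_Z (A : SAlgebra S) : conCommutator A (ZCon A) (ZCon A) = ⊥ :=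
  le_antisymm
    (sInf_le (fun n m t a b u v ha _ hp =>
      ZCon_centralizes A n m t a b u v ha (fun _ => top_r _ _) hp))
    bot_le

theorem center_eq (A : SAlgebra S) : conCenter A = ZCon A := by
  refine le_antisymm (sSup_le ?_) (le_sSup (comm_Z_top A))
  intro θ hθ x y hxy
  have hc : Centralizes A θ ⊤ ⊥ := by
    have := centralizes_commutator A θ ⊤
    rwa [hθ] at this
  intro N t u v
  constructor
  · intro hxe
    exact bot_iff.mp (hc 1 N t ![x] ![y] u v
      (fun i => by fin_cases i; exact hxy) (fun _ => top_r _ _) (bot_iff.mpr hxe))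
  · intro hye
    exact bot_iff.mp (hc 1 N t ![y] ![x] u v
      (fun i => by fin_cases i; exact θ.iseqv.symm hxy) (fun _ => top_r _ _) (bot_iff.mpr hye))

end CCE

namespace CCE

variable {S : Signature}

theorem evald {A : SAlgebra S} (d : STerm S 3) {m : ℕ} (t0 t1 t2 : STerm S m)
    (env : Fin m → A.carrier) :
    (subst ![t0, t1, t2] d).eval A env
      = d.eval A ![t0.eval A env, t1.eval A env, t2.eval A env] := by
  rw [eval_subst]
  congr 1
  funext i
  fin_cases i <;> rfl

section EqLemmas

variable {A : SAlgebra S} {d : STerm S 3}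
  (h1 : ∀ x y : A.carrier, d.eval A ![x, y, y] = x)
  (h2 : ∀ x y : A.carrier, Zr A x y → d.eval A ![x, x, y] = y)

include h1 h2

/-- `d(x, s, d(s,x,y)) = y` for centrally related `x, y`. -/
theorem eq_E' (x y s : A.carrier) (hz : Zr A x y) :
    d.eval A ![x, s, d.eval A ![s, x, y]] = y := by
  set T : STerm S 5 :=
    subst ![STerm.var 0, STerm.var 1, subst ![STerm.var 2, STerm.var 3, STerm.var 4] d] d
    with hT
  have c : ∀ v0 v1 v2 v3 v4 : A.carrier,
      T.eval A ![v0, v1, v2, v3, v4] = d.eval A ![v0, v1, d.eval A ![v2, v3, v4]] := by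
    intro v0 v1 v2 v3 v4
    rw [hT, evald, evald]
    rfl
  have hML := ML T ![x, s, s, x, x] ![x, x, x, x, x] ![x, s, s, x, y] ![x, x, x, x, y] ?_
  · rw [c, c, c, c] at hML
    have hprem : d.eval A ![x, s, d.eval A ![s, x, x]] = d.eval A ![x, x, d.eval A ![x, x, x]] := by
      rw [h1 s x, h1 x s, h1 x x, h1 x x]
    have := hML.mp hprem
    rwa [h2 x y hz, h2 x y hz] at this
  · intro i
    fin_cases i
    · exact Or.inr ⟨rfl, rfl⟩
    · exact Or.inr ⟨rfl, rfl⟩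
    · exact Or.inr ⟨rfl, rfl⟩
    · exact Or.inr ⟨rfl, rfl⟩
    · exact Or.inl ⟨hz, rfl, rfl⟩

/-- `d(s, y, x) = d(s, d(s,x,y), s)` for centrally related `x, y`. -/
theorem eq_symm (x y s : A.carrier) (hz : Zr A x y) :
    d.eval A ![s, y, x] = d.eval A ![s, d.eval A ![s, x, y], s] := by
  set T : STerm S 5 :=
    subst ![STerm.var 0, subst ![STerm.var 1, STerm.var 2, STerm.var 4] d, STerm.var 3] d
    with hT
  have c : ∀ v0 v1 v2 v3 v4 : A.carrier,
      T.eval A ![v0, v1, v2, v3, v4] = d.eval A ![v0, d.eval A ![v1, v2, v4], v3] := by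
    intro v0 v1 v2 v3 v4
    rw [hT, evald, evald]
    rfl
  have hML := ML T ![s, x, x, x, x] ![s, s, x, s, x] ![s, x, x, x, y] ![s, s, x, s, y] ?_
  · rw [c, c, c, c] at hML
    have hprem : d.eval A ![s, d.eval A ![x, x, x], x] = d.eval A ![s, d.eval A ![s, x, x], s] := by
      rw [h1 x x, h1 s x, h1 s s]
    have := hML.mp hprem
    rwa [h2 x y hz] at this
  · intro i
    fin_cases i
    · exact Or.inr ⟨rfl, rfl⟩
    · exact Or.inr ⟨rfl, rfl⟩
    · exact Or.inr ⟨rfl, rfl⟩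
    · exact Or.inr ⟨rfl, rfl⟩
    · exact Or.inl ⟨hz, rfl, rfl⟩

/-- `d(d(s,t,w), w, z) = d(s,t,z)` for centrally related `w, z`. -/
theorem eq_L1 (s t w z : A.carrier) (hz : Zr A w z) :
    d.eval A ![d.eval A ![s, t, w], w, z] = d.eval A ![s, t, z] := by
  set T : STerm S 5 :=
    subst ![subst ![STerm.var 0, STerm.var 1, STerm.var 2] d, STerm.var 3, STerm.var 4] d
    with hT
  have c : ∀ v0 v1 v2 v3 v4 : A.carrier,
      T.eval A ![v0, v1, v2, v3, v4] = d.eval A ![d.eval A ![v0, v1, v2], v3, v4] := by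
    intro v0 v1 v2 v3 v4
    rw [hT, evald, evald]
    rfl
  have hML := ML T ![s, t, w, w, w] ![s, t, t, t, w] ![s, t, w, w, z] ![s, t, t, t, z] ?_
  · rw [c, c, c, c] at hML
    have hprem : d.eval A ![d.eval A ![s, t, w], w, w] = d.eval A ![d.eval A ![s, t, t], t, w] := by
      rw [h1 s t, h1 (d.eval A ![s, t, w]) w]
    have := hML.mp hprem
    rwa [h1 s t] at this
  · intro i
    fin_cases i
    · exact Or.inr ⟨rfl, rfl⟩
    · exact Or.inr ⟨rfl, rfl⟩
    · exact Or.inr ⟨rfl, rfl⟩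
    · exact Or.inr ⟨rfl, rfl⟩
    · exact Or.inl ⟨hz, rfl, rfl⟩

/-- `d(s,x,z) = d(d(s,x,y), s, d(s,y,z))` for a central chain `x, y, z`. -/
theorem eq_tr (x y z s : A.carrier) (hxy : Zr A x y) (hyz : Zr A y z) :
    d.eval A ![s, x, z] = d.eval A ![d.eval A ![s, x, y], s, d.eval A ![s, y, z]] := by
  set K := d.eval A ![s, y, z] with hK
  set T : STerm S 5 :=
    subst ![subst ![STerm.var 0, STerm.var 4, STerm.var 1] d, STerm.var 2, STerm.var 3] d
    with hT
  have c : ∀ v0 v1 v2 v3 v4 : A.carrier,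
      T.eval A ![v0, v1, v2, v3, v4] = d.eval A ![d.eval A ![v0, v4, v1], v2, v3] := by
    intro v0 v1 v2 v3 v4
    rw [hT, evald, evald]
    rfl
  have hyx : Zr A y x := (ZCon A).iseqv.symm hxy
  have hxz : Zr A x z := (ZCon A).iseqv.trans hxy hyz
  have hsK : Zr A s K := by
    have h' : (ZCon A).r (d.eval A ![s, y, z]) (d.eval A ![s, y, y]) := by
      refine eval_rel (ZCon A) d ?_
      intro i
      fin_cases i
      · exact (ZCon A).iseqv.refl s
      · exact (ZCon A).iseqv.refl y
      · exact (ZCon A).iseqv.symm hyz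
    rw [h1 s y] at h'
    exact (ZCon A).iseqv.symm h'
  have hML := ML T ![s, x, x, z, y] ![s, y, s, K, y] ![s, x, x, z, x] ![s, y, s, K, x] ?_
  · rw [c, c, c, c] at hML
    have hprem : d.eval A ![d.eval A ![s, y, x], x, z] = d.eval A ![d.eval A ![s, y, y], s, K] := by
      rw [eq_L1 h1 h2 s y x z hxz, h1 s y, h2 s K hsK, hK]
    have := hML.mp hprem
    rwa [h1 s x] at this
  · intro i
    fin_cases i
    · exact Or.inr ⟨rfl, rfl⟩
    · exact Or.inr ⟨rfl, rfl⟩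
    · exact Or.inr ⟨rfl, rfl⟩
    · exact Or.inr ⟨rfl, rfl⟩
    · exact Or.inl ⟨hyx, rfl, rfl⟩

end EqLemmas

end CCE

namespace CCE

variable {S : Signature}

section CompatLemma

variable {A : SAlgebra S} {d : STerm S 3}
  (h1 : ∀ x y : A.carrier, d.eval A ![x, y, y] = x)
  (h2 : ∀ x y : A.carrier, Zr A x y → d.eval A ![x, x, y] = y)

include h1 h2

theorem eq_compat (o : S.ops) (x y : Fin (S.arity o) → A.carrier) (s : A.carrier)
    (hz : ∀ i, Zr A (x i) (y i)) :
    d.eval A ![s, A.interp o x, A.interp o y] =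
      d.eval A ![s, A.interp o (fun _ => s),
        A.interp o (fun i => d.eval A ![s, x i, y i])] := by
  classical
  set iA := fun i : Fin (S.arity o) =>
    Fin.natAdd (S.arity o) (Fin.castAdd (S.arity o + (S.arity o + 1)) i) with hiA
  set iB := fun i : Fin (S.arity o) =>
    Fin.natAdd (S.arity o) (Fin.natAdd (S.arity o) (Fin.castAdd (S.arity o + 1) i)) with hiB
  set iC := fun i : Fin (S.arity o) =>
    Fin.natAdd (S.arity o) (Fin.natAdd (S.arity o)
      (Fin.natAdd (S.arity o) (Fin.castAdd 1 i))) with hiC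
  set i0 := Fin.natAdd (S.arity o) (Fin.natAdd (S.arity o)
    (Fin.natAdd (S.arity o) (Fin.natAdd (S.arity o) (0 : Fin 1)))) with hi0
  set E := fun (vc vA vB vC : Fin (S.arity o) → A.carrier) (w : A.carrier) =>
    Fin.append vc (Fin.append vA (Fin.append vB (Fin.append vC ![w]))) with hE
  set T : STerm S (S.arity o + (S.arity o + (S.arity o + (S.arity o + 1)))) :=
    subst ![STerm.var i0,
      STerm.app o (fun i => STerm.var (iA i)),
      STerm.app o (fun i => subst ![STerm.var (iB i), STerm.var (iC i),
        STerm.var (Fin.castAdd (S.arity o + (S.arity o + (S.arity o + 1))) i)] d)] d with hT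
  have hev : ∀ (vc vA vB vC : Fin (S.arity o) → A.carrier) (w : A.carrier),
      T.eval A (E vc vA vB vC w) =
        d.eval A ![w, A.interp o vA, A.interp o (fun i => d.eval A ![vB i, vC i, vc i])] := by
    intro vc vA vB vC w
    rw [hT, eval_subst]
    congr 1
    funext j
    fin_cases j
    · show STerm.eval A (STerm.var i0) (E vc vA vB vC w) = w
      show E vc vA vB vC w i0 = w
      simp [hE, hi0, Fin.append_right]
    · show STerm.eval A (STerm.app o (fun i => STerm.var (iA i))) (E vc vA vB vC w)
        = A.interp o vA
      show A.interp o (fun i => E vc vA vB vC w (iA i)) = A.interp o vA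
      congr 1
      funext i
      simp [hE, hiA, Fin.append_right, Fin.append_left]
    · show A.interp o (fun i =>
          STerm.eval A (subst ![STerm.var (iB i), STerm.var (iC i),
            STerm.var (Fin.castAdd (S.arity o + (S.arity o + (S.arity o + 1))) i)] d)
            (E vc vA vB vC w))
        = A.interp o (fun i => d.eval A ![vB i, vC i, vc i])
      congr 1
      funext i
      rw [evald]
      show d.eval A ![E vc vA vB vC w (iB i), E vc vA vB vC w (iC i),
        E vc vA vB vC w (Fin.castAdd (S.arity o + (S.arity o + (S.arity o + 1))) i)]
        = d.eval A ![vB i, vC i, vc i]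
      simp [hE, hiB, hiC, Fin.append_right, Fin.append_left]
  have hML := ML T (E x x x x s) (E x (fun _ => s) (fun _ => s) x s)
      (E y x x x s) (E y (fun _ => s) (fun _ => s) x s) ?_
  · rw [hev, hev, hev, hev] at hML
    have e1 : (fun i => d.eval A ![x i, x i, x i]) = x := funext fun i => h1 (x i) (x i)
    have e2 : (fun i => d.eval A ![s, x i, x i]) = (fun _ => s) := funext fun i => h1 s (x i)
    have hprem : d.eval A ![s, A.interp o x, A.interp o (fun i => d.eval A ![x i, x i, x i])]
        = d.eval A ![s, A.interp o (fun _ => s),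
            A.interp o (fun i => d.eval A ![s, x i, x i])] := by
      rw [e1, e2, h1 s (A.interp o x), h1 s (A.interp o (fun _ => s))]
    have hconc := hML.mp hprem
    have e3 : (fun i => d.eval A ![x i, x i, y i]) = y := funext fun i => h2 _ _ (hz i)
    rwa [e3] at hconc
  · intro i
    refine Fin.addCases ?_ ?_ i
    · intro i1
      refine Or.inl ?_
      simp only [hE, Fin.append_left]
      exact ⟨hz i1, by trivial, by trivial⟩
    · intro j
      refine Fin.addCases ?_ ?_ j
      · intro i1
        refine Or.inr ?_
        simp only [hE, Fin.append_right, Fin.append_left]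
        exact ⟨by trivial, by trivial⟩
      · intro j2
        refine Fin.addCases ?_ ?_ j2
        · intro i1
          refine Or.inr ?_
          simp only [hE, Fin.append_right, Fin.append_left]
          exact ⟨by trivial, by trivial⟩
        · intro j3
          refine Fin.addCases ?_ ?_ j3
          · intro i1
            refine Or.inr ?_
            simp only [hE, Fin.append_right, Fin.append_left]
            exact ⟨by trivial, by trivial⟩
          · intro j4
            refine Or.inr ?_
            simp only [hE, Fin.append_right]
            exact ⟨by trivial, by trivial⟩

end CompatLemma

end CCE

/-- Extension of central congruences (Davey–Kovács / Gumm): if `A` is a subalgebra of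
`Abar` (via `e`) in a congruence modular variety with Gumm difference term `d`, `a ∈ A`,
`ᾱ ≤ ζ(Abar)` and `β ≤ ᾱ|_A`, then `β̄ := {(x,y) ∈ ζ(Abar) : d(a,x,y) ∈ [a]β}` is a
congruence on `Abar` with `β̄ ≤ ᾱ` and `β̄|_A = β`. -/
theorem central_congruence_extension {S : Signature}
    (V : SAlgebra S → Prop) (hV : IsCongruenceModularVariety V)
    (d : STerm S 3) (hd : IsGummDifferenceTerm V d)
    (A Abar : SAlgebra S) (hA : V A) (hAbar : V Abar)
    (e : SHom A Abar) (he : Function.Injective e.toFun)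
    (a : A.carrier)
    (αbar : SCon Abar) (hαbar : αbar ≤ conCenter Abar)
    (β : SCon A) (hβ : β ≤ SCon.comap e αbar) :
    ∃ βbar : SCon Abar,
      (∀ x y : Abar.carrier, βbar.r x y ↔
        ((conCenter Abar).r x y ∧
          ∃ b : A.carrier, β.r a b ∧ d.eval Abar ![e.toFun a, x, y] = e.toFun b)) ∧
      βbar ≤ αbar ∧ SCon.comap e βbar = β := by
  classical
  obtain ⟨hd1, hd2⟩ := hd
  have h1 : ∀ x y : Abar.carrier, d.eval Abar ![x, y, y] = x := hd1 Abar hAbar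
  have h2 : ∀ x y : Abar.carrier, CCE.Zr Abar x y → d.eval Abar ![x, x, y] = y :=
    fun x y h => hd2 Abar hAbar (CCE.ZCon Abar) (CCE.comm_Z_Z Abar) x y h
  have h1A : ∀ x y : A.carrier, d.eval A ![x, y, y] = x := hd1 A hA
  have hZle : αbar ≤ CCE.ZCon Abar := by
    rw [← CCE.center_eq Abar]; exact hαbar
  have hβZ : ∀ x y : A.carrier, β.r x y → CCE.Zr Abar (e.toFun x) (e.toFun y) :=
    fun x y h => hZle _ _ (hβ x y h)
  have hed : ∀ p q r : A.carrier,
      e.toFun (d.eval A ![p, q, r]) = d.eval Abar ![e.toFun p, e.toFun q, e.toFun r] := by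
    intro p q r
    rw [CCE.hom_eval e d]
    congr 1
    funext i
    fin_cases i <;> rfl
  have hrefl : ∀ x : Abar.carrier, CCE.Zr Abar x x ∧
      ∃ b : A.carrier, β.r a b ∧ d.eval Abar ![e.toFun a, x, x] = e.toFun b :=
    fun x => ⟨(CCE.ZCon Abar).iseqv.refl x, a, β.iseqv.refl a, h1 (e.toFun a) x⟩
  have hsymm : ∀ x y : Abar.carrier,
      (CCE.Zr Abar x y ∧ ∃ b : A.carrier, β.r a b ∧ d.eval Abar ![e.toFun a, x, y] = e.toFun b) →
      (CCE.Zr Abar y x ∧ ∃ b : A.carrier, β.r a b ∧ d.eval Abar ![e.toFun a, y, x] = e.toFun b) := by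
    rintro x y ⟨hz, b, hab, heq⟩
    refine ⟨(CCE.ZCon Abar).iseqv.symm hz, d.eval A ![a, b, a], ?_, ?_⟩
    · have hrel : β.r (d.eval A ![a, a, a]) (d.eval A ![a, b, a]) := by
        refine CCE.eval_rel β d ?_
        intro i; fin_cases i
        exacts [β.iseqv.refl a, hab, β.iseqv.refl a]
      rwa [h1A a a] at hrel
    · rw [CCE.eq_symm h1 h2 x y (e.toFun a) hz, heq, hed a b a]
  have htrans : ∀ x y z : Abar.carrier,
      (CCE.Zr Abar x y ∧ ∃ b : A.carrier, β.r a b ∧ d.eval Abar ![e.toFun a, x, y] = e.toFun b) →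
      (CCE.Zr Abar y z ∧ ∃ b : A.carrier, β.r a b ∧ d.eval Abar ![e.toFun a, y, z] = e.toFun b) →
      (CCE.Zr Abar x z ∧ ∃ b : A.carrier, β.r a b ∧ d.eval Abar ![e.toFun a, x, z] = e.toFun b) := by
    rintro x y z ⟨hxy, b1, hab1, heq1⟩ ⟨hyz, b2, hab2, heq2⟩
    refine ⟨(CCE.ZCon Abar).iseqv.trans hxy hyz, d.eval A ![b1, a, b2], ?_, ?_⟩
    · have hrel : β.r (d.eval A ![a, a, a]) (d.eval A ![b1, a, b2]) := by
        refine CCE.eval_rel β d ?_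
        intro i; fin_cases i
        exacts [hab1, β.iseqv.refl a, hab2]
      rwa [h1A a a] at hrel
    · rw [CCE.eq_tr h1 h2 x y z (e.toFun a) hxy hyz, heq1, heq2, hed b1 a b2]
  have hcompat : ∀ (o : S.ops) (x y : Fin (S.arity o) → Abar.carrier),
      (∀ i, CCE.Zr Abar (x i) (y i) ∧
        ∃ b : A.carrier, β.r a b ∧ d.eval Abar ![e.toFun a, x i, y i] = e.toFun b) →
      (CCE.Zr Abar (Abar.interp o x) (Abar.interp o y) ∧
        ∃ b : A.carrier, β.r a b ∧
          d.eval Abar ![e.toFun a, Abar.interp o x, Abar.interp o y] = e.toFun b) := by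
    intro o x y h
    have hz : ∀ i, CCE.Zr Abar (x i) (y i) := fun i => (h i).1
    choose b hab heq using fun i => (h i).2
    refine ⟨(CCE.ZCon Abar).compat o x y hz,
      d.eval A ![a, A.interp o (fun _ => a), A.interp o b], ?_, ?_⟩
    · have hrel : β.r (d.eval A ![a, A.interp o (fun _ => a), A.interp o (fun _ => a)])
          (d.eval A ![a, A.interp o (fun _ => a), A.interp o b]) := by
        refine CCE.eval_rel β d ?_
        intro i; fin_cases i
        exacts [β.iseqv.refl a, β.iseqv.refl _, β.compat o _ _ (fun j => hab j)]
      rwa [h1A a (A.interp o (fun _ => a))] at hrel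
    · rw [CCE.eq_compat h1 h2 o x y (e.toFun a) hz, hed]
      have c1 : e.toFun (A.interp o (fun _ => a)) = Abar.interp o (fun _ => e.toFun a) :=
        e.map o _
      have c2 : e.toFun (A.interp o b)
          = Abar.interp o (fun i => d.eval Abar ![e.toFun a, x i, y i]) := by
        rw [e.map]
        congr 1
        funext i
        exact (heq i).symm
      rw [c1, c2]
  refine ⟨⟨fun x y => CCE.Zr Abar x y ∧
      ∃ b : A.carrier, β.r a b ∧ d.eval Abar ![e.toFun a, x, y] = e.toFun b,
      ⟨hrefl, fun {x y} => hsymm x y, fun {x y z} => htrans x y z⟩, hcompat⟩, ?_, ?_, ?_⟩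
  · intro x y
    rw [CCE.center_eq Abar]
    exact Iff.rfl
  · rintro x y ⟨hz, b, hab, heq⟩
    have hy : d.eval Abar ![x, e.toFun a, e.toFun b] = y := by
      have hE := CCE.eq_E' h1 h2 x y (e.toFun a) hz
      rwa [heq] at hE
    have hrel : αbar.r (d.eval Abar ![x, e.toFun a, e.toFun a])
        (d.eval Abar ![x, e.toFun a, e.toFun b]) := by
      refine CCE.eval_rel αbar d ?_
      intro i; fin_cases i
      exacts [αbar.iseqv.refl x, αbar.iseqv.refl _, hβ a b hab]
    rwa [h1 x (e.toFun a), hy] at hrel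
  · apply le_antisymm
    · rintro x y ⟨hz, b, hab, heq⟩
      have hy : d.eval Abar ![e.toFun x, e.toFun a, e.toFun b] = e.toFun y := by
        have hE := CCE.eq_E' h1 h2 (e.toFun x) (e.toFun y) (e.toFun a) hz
        rwa [heq] at hE
      have hxy : d.eval A ![x, a, b] = y := by
        apply he
        rw [hed x a b, hy]
      have hrel : β.r (d.eval A ![x, a, a]) (d.eval A ![x, a, b]) := by
        refine CCE.eval_rel β d ?_
        intro i; fin_cases i
        exacts [β.iseqv.refl x, β.iseqv.refl a, hab]
      rwa [h1A x a, hxy] at hrel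
    · intro x y hxy
      refine ⟨hβZ x y hxy, d.eval A ![a, x, y], ?_, ?_⟩
      · have hrel : β.r (d.eval A ![a, x, x]) (d.eval A ![a, x, y]) := by
          refine CCE.eval_rel β d ?_
          intro i; fin_cases i
          exacts [β.iseqv.refl a, β.iseqv.refl x, hxy]
        rwa [h1A a x] at hrel
      · rw [hed a x y]
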